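/- Let r ≥ 3 and 2 ≤ s < r, and let 𝓕 be an r-wise t-intersecting family of subsets of [n] that is not a t-star, i.e., there is no t-element set contained in every member of 𝓕. Then 𝓕 is s-wise (t + r − s)-intersecting. -/

import Mathlib

/-- A family `𝓕` is `r`-wise `t`-intersecting if any `r` (not necessarily distinct)
members have at least `t` common elements. -/
def RwiseIntersecting (r t : ℕ) (𝓕 : Finset (Finset ℕ)) : Prop :=
  ∀ G : Fin r → Finset ℕ, (∀ i, G i ∈ 𝓕) → t ≤ (⋂ i, ((G i : Finset ℕ) : Set ℕ)).ncard

theorem rwise_intersecting_not_star_swise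
    (n r s t : ℕ) (hr : 3 ≤ r) (hs : 2 ≤ s) (hsr : s < r) (ht : 1 ≤ t)
    (𝓕 : Finset (Finset ℕ))
    (h𝓕 : ∀ F ∈ 𝓕, F ⊆ Finset.Icc 1 n)
    (hint : RwiseIntersecting r t 𝓕)
    (hstar : ¬ ∃ T : Finset ℕ, T.card = t ∧ ∀ F ∈ 𝓕, T ⊆ F) :
    RwiseIntersecting s (t + r - s) 𝓕 := by
  -- finiteness of intersections
  have hfin : ∀ k, 0 < k → ∀ H : Fin k → Finset ℕ,
      (⋂ i, ((H i : Finset ℕ) : Set ℕ)).Finite := by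
    intro k hk H
    exact Set.Finite.subset (H ⟨0, hk⟩).finite_toSet (Set.iInter_subset _ (⟨0, hk⟩ : Fin k))
  -- any k-fold intersection (1 ≤ k ≤ r) has at least t elements
  have hbase : ∀ k, 0 < k → k ≤ r → ∀ H : Fin k → Finset ℕ, (∀ i, H i ∈ 𝓕) →
      t ≤ (⋂ i, ((H i : Finset ℕ) : Set ℕ)).ncard := by
    intro k hk hkr H hH
    set G' : Fin r → Finset ℕ := fun i => H (if h : (i : ℕ) < k then ⟨i, h⟩ else ⟨0, hk⟩)
      with hG'
    have h1 : t ≤ (⋂ i, ((G' i : Finset ℕ) : Set ℕ)).ncard := by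
      refine hint G' fun i => ?_
      simp only [hG']
      split <;> exact hH _
    refine le_trans h1 (Set.ncard_le_ncard ?_ (hfin k hk H))
    intro x hx
    simp only [Set.mem_iInter] at hx ⊢
    intro j
    have hj : (j : ℕ) < r := lt_of_lt_of_le j.isLt hkr
    have := hx ⟨j, hj⟩
    simpa [hG', j.isLt] using this
  -- shrinking step: there is a member not containing the intersection
  have hstep : ∀ k, 0 < k → k ≤ r → ∀ H : Fin k → Finset ℕ, (∀ i, H i ∈ 𝓕) →
      ∃ F ∈ 𝓕, ¬ (⋂ i, ((H i : Finset ℕ) : Set ℕ)) ⊆ ↑F := by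
    intro k hk hkr H hH
    by_contra hc
    push_neg at hc
    have hX := hfin k hk H
    have htX := hbase k hk hkr H hH
    rw [Set.ncard_eq_toFinset_card _ hX] at htX
    obtain ⟨T, hT, hTcard⟩ := Finset.exists_subset_card_eq htX
    refine hstar ⟨T, hTcard, fun F hF x hx => ?_⟩
    have hxX : x ∈ (⋂ i, ((H i : Finset ℕ) : Set ℕ)) := hX.mem_toFinset.mp (hT hx)
    exact hc F hF hxX
  -- main downward induction
  have main : ∀ d k, 0 < k → k + d = r → ∀ H : Fin k → Finset ℕ, (∀ i, H i ∈ 𝓕) →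
      t + d ≤ (⋂ i, ((H i : Finset ℕ) : Set ℕ)).ncard := by
    intro d
    induction d with
    | zero =>
      intro k hk hkr H hH
      have hk' : k = r := by omega
      subst hk'
      simpa using hint H hH
    | succ d ih =>
      intro k hk hkr H hH
      obtain ⟨F, hF, hnsub⟩ := hstep k hk (by omega) H hH
      set H' : Fin (k + 1) → Finset ℕ := Fin.snoc H F with hH'def
      have hmem : ∀ i, H' i ∈ 𝓕 := by
        intro i
        refine Fin.lastCases ?_ ?_ i
        · simpa [hH'def] using hF
        · intro j; simpa [hH'def] using hH j
      have heq : (⋂ i, ((H' i : Finset ℕ) : Set ℕ))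
          = (⋂ i, ((H i : Finset ℕ) : Set ℕ)) ∩ ↑F := by
        ext x
        simp only [Set.mem_iInter, Set.mem_inter_iff]
        constructor
        · intro h
          refine ⟨fun j => ?_, ?_⟩
          · simpa [hH'def] using h j.castSucc
          · simpa [hH'def] using h (Fin.last k)
        · rintro ⟨h1, h2⟩ i
          refine Fin.lastCases ?_ ?_ i
          · simpa [hH'def] using h2
          · intro j; simpa [hH'def] using h1 j
      have h1 : t + d ≤ ((⋂ i, ((H i : Finset ℕ) : Set ℕ)) ∩ ↑F).ncard := by
        have := ih (k + 1) (by omega) (by omega) H' hmem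
        rwa [heq] at this
      have hss : (⋂ i, ((H i : Finset ℕ) : Set ℕ)) ∩ ↑F
          ⊂ (⋂ i, ((H i : Finset ℕ) : Set ℕ)) := by
        refine ⟨Set.inter_subset_left, fun hsub => ?_⟩
        exact hnsub fun x hx => (hsub hx).2
      have hlt := Set.ncard_lt_ncard hss (hfin k hk H)
      omega
  intro G hG
  have h := main (r - s) s (by omega) (by omega) G hG
  omega
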